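/- For positive integers p ≥ q ≥ r, if p − q − r + 1 ≥ 0 then the product [p]·[q]·[r] is a trapezoidal polynomial whose stable part has length exactly p − q − r + 1, and this length satisfies p − q − r + 1 ≤ p + r − q − 1. -/
import Mathlib


open Polynomial

/-- `qpoly n = 1 + s + ⋯ + s^(n-1)`, denoted `[n]` in the paper. -/
noncomputable def qpoly (n : ℕ) : Polynomial ℝ :=
  ∑ i ∈ Finset.range n, Polynomial.X ^ i

/-- All coefficients of `p` over its support `0, …, natDegree p` are positive. -/
def PosCoeffs (p : Polynomial ℝ) : Prop :=
  ∀ k ≤ p.natDegree, 0 < p.coeff k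

/-- `p` is symmetric: its coefficient sequence over its support reads the same
forwards and backwards. -/
def SymmetricPoly (p : Polynomial ℝ) : Prop :=
  ∀ k ≤ p.natDegree, p.coeff k = p.coeff (p.natDegree - k)

/-- `p` is trapezoidal: its coefficients strictly increase, then are constant,
then strictly decrease. -/
def Trapezoidal (p : Polynomial ℝ) : Prop :=
  ∃ i j : ℕ, i ≤ j ∧ j ≤ p.natDegree ∧
    (∀ k, k < i → p.coeff k < p.coeff (k + 1)) ∧
    (∀ k, i ≤ k → k < j → p.coeff k = p.coeff (k + 1)) ∧
    (∀ k, j ≤ k → k < p.natDegree → p.coeff (k + 1) < p.coeff k)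

/-- `p` has a run of `l + 1` equal consecutive coefficients within its support. -/
def HasRun (p : Polynomial ℝ) (l : ℕ) : Prop :=
  ∃ k0 : ℕ, k0 + l ≤ p.natDegree ∧ ∀ i ≤ l, p.coeff (k0 + i) = p.coeff k0

/-- The stable part of `p` has length `l`: `l` is the largest integer such that
some `l + 1` consecutive coefficients of `p` are all equal. -/
def StableLength (p : Polynomial ℝ) (l : ℕ) : Prop :=
  HasRun p l ∧ ∀ l', HasRun p l' → l' ≤ l

/-! ### Auxiliary lemmas -/

lemma qpoly_coeff (n k : ℕ) : (qpoly n).coeff k = if k < n then 1 else 0 := by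
  simp [qpoly, Polynomial.finset_sum_coeff, Polynomial.coeff_X_pow, eq_comm]

lemma qpoly_monic {n : ℕ} (h : 1 ≤ n) : (qpoly n).Monic :=
  Polynomial.monic_geom_sum_X (by omega)

lemma qpoly_natDegree {n : ℕ} (h : 1 ≤ n) : (qpoly n).natDegree = n - 1 := by
  have h1 : (qpoly n).natDegree ≤ n - 1 := by
    apply Polynomial.natDegree_sum_le_of_forall_le
    intro i hi
    simp only [Polynomial.natDegree_X_pow]
    exact Nat.le_sub_one_of_lt (Finset.mem_range.mp hi)
  have h2 : (qpoly n).coeff (n-1) ≠ 0 := by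
    rw [qpoly_coeff]; simp only [if_pos (by omega : n - 1 < n)]; norm_num
  exact le_antisymm h1 (Polynomial.le_natDegree_of_ne_zero h2)

/-- Coefficient of `qpoly p * qpoly q` at `k`. -/
def Dcoef (p q k : ℕ) : ℕ := min (k+1) p - (k+1-q)

lemma mul_coeff_eq (p q k : ℕ) :
    (qpoly p * qpoly q).coeff k = (Dcoef p q k : ℝ) := by
  rw [Polynomial.coeff_mul, Finset.Nat.sum_antidiagonal_eq_sum_range_succ_mk]
  simp only [qpoly_coeff, ite_mul, one_mul, zero_mul, ← ite_and]
  rw [Finset.sum_boole]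
  have : (Finset.range k.succ).filter (fun x => x < p ∧ k - x < q)
      = Finset.Ico (k+1-q) (min (k+1) p) := by
    ext x
    simp only [Finset.mem_filter, Finset.mem_range, Finset.mem_Ico, Nat.lt_succ_iff, lt_min_iff]
    omega
  rw [this, Nat.card_Ico, Dcoef]

/-- Coefficient of `qpoly p * qpoly q * qpoly r` at `k`. -/
def Ccoef (p q r k : ℕ) : ℕ := ∑ i ∈ Finset.Ico (k+1-r) (k+1), Dcoef p q i

lemma triple_coeff_eq (p q r k : ℕ) :
    (qpoly p * qpoly q * qpoly r).coeff k = (Ccoef p q r k : ℝ) := by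
  rw [Polynomial.coeff_mul, Finset.Nat.sum_antidiagonal_eq_sum_range_succ_mk]
  simp only [mul_coeff_eq, qpoly_coeff, mul_ite, mul_one, mul_zero]
  rw [← Finset.sum_filter]
  have : (Finset.range k.succ).filter (fun x => k - x < r) = Finset.Ico (k+1-r) (k+1) := by
    ext x
    simp only [Finset.mem_filter, Finset.mem_range, Finset.mem_Ico, Nat.lt_succ_iff]
    omega
  rw [this, Ccoef, Nat.cast_sum]

lemma Ccoef_step (p q r k : ℕ) (hr : 1 ≤ r) :
    Ccoef p q r (k+1) + (if r ≤ k+1 then Dcoef p q (k+1-r) else 0)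
      = Ccoef p q r k + Dcoef p q (k+1) := by
  unfold Ccoef
  have h1 : ∑ i ∈ Finset.Ico (k+1-r) (k+1+1), Dcoef p q i
      = ∑ i ∈ Finset.Ico (k+1-r) (k+1), Dcoef p q i + Dcoef p q (k+1) :=
    Finset.sum_Ico_succ_top (by omega) _
  by_cases hc : r ≤ k+1
  · rw [if_pos hc]
    have h2 : ∑ i ∈ Finset.Ico (k+1-r) (k+1+1), Dcoef p q i
        = Dcoef p q (k+1-r) + ∑ i ∈ Finset.Ico ((k+1-r)+1) (k+1+1), Dcoef p q i :=
      Finset.sum_eq_sum_Ico_succ_bot (by omega) _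
    have h3 : k+1+1-r = (k+1-r)+1 := by omega
    rw [h3]
    omega
  · rw [if_neg hc]
    have h3 : k+1+1-r = k+1-r := by omega
    rw [h3]
    omega

section signs
variable {p q r k : ℕ} (hr : 1 ≤ r) (hqr : r ≤ q) (hpq : q ≤ p) (h : q + r ≤ p + 1)

include hr hqr hpq h in
lemma Ccoef_inc (hk : k < q + r - 2) : Ccoef p q r k < Ccoef p q r (k+1) := by
  have hs := Ccoef_step p q r k hr
  have hd : (if r ≤ k+1 then Dcoef p q (k+1-r) else 0) < Dcoef p q (k+1) := by
    unfold Dcoef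
    split_ifs <;> simp only [Nat.min_def] <;> split_ifs <;> omega
  omega

include hr hqr hpq h in
lemma Ccoef_plateau (hk1 : q + r - 2 ≤ k) (hk2 : k < p - 1) :
    Ccoef p q r k = Ccoef p q r (k+1) := by
  have hs := Ccoef_step p q r k hr
  have hd : (if r ≤ k+1 then Dcoef p q (k+1-r) else 0) = Dcoef p q (k+1) := by
    unfold Dcoef
    split_ifs <;> simp only [Nat.min_def] <;> split_ifs <;> omega
  omega

include hr hqr hpq h in
lemma Ccoef_dec (hk1 : p - 1 ≤ k) (hk2 : k ≤ p + q + r - 4) :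
    Ccoef p q r (k+1) < Ccoef p q r k := by
  have hs := Ccoef_step p q r k hr
  have hd : Dcoef p q (k+1) < (if r ≤ k+1 then Dcoef p q (k+1-r) else 0) := by
    unfold Dcoef
    split_ifs <;> simp only [Nat.min_def] <;> split_ifs <;> omega
  omega
end signs

theorem trapezoidal_qpoly_mul (p q r : ℕ) (hr : 1 ≤ r) (hqr : r ≤ q) (hpq : q ≤ p)
    (h : q + r ≤ p + 1) :
    Trapezoidal (qpoly p * qpoly q * qpoly r) ∧
      StableLength (qpoly p * qpoly q * qpoly r) (p + 1 - q - r) ∧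
      p + 1 - q - r ≤ p + r - q - 1 := by
  have hq1 : 1 ≤ q := hr.trans hqr
  have hp1 : 1 ≤ p := hq1.trans hpq
  set F := qpoly p * qpoly q * qpoly r with hF
  have hN : F.natDegree = p + q + r - 3 := by
    rw [hF, ((qpoly_monic hp1).mul (qpoly_monic hq1)).natDegree_mul (qpoly_monic hr),
      (qpoly_monic hp1).natDegree_mul (qpoly_monic hq1),
      qpoly_natDegree hp1, qpoly_natDegree hq1, qpoly_natDegree hr]
    omega
  have cC : ∀ k, F.coeff k = (Ccoef p q r k : ℝ) := triple_coeff_eq p q r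
  -- real versions of the three sign facts
  have rinc : ∀ k, k < q + r - 2 → F.coeff k < F.coeff (k+1) := by
    intro k hk
    rw [cC, cC]
    exact_mod_cast Ccoef_inc hr hqr hpq h hk
  have rplat : ∀ k, q + r - 2 ≤ k → k < p - 1 → F.coeff k = F.coeff (k+1) := by
    intro k hk1 hk2
    rw [cC, cC]
    exact_mod_cast Ccoef_plateau hr hqr hpq h hk1 hk2
  have rdec : ∀ k, p - 1 ≤ k → k < F.natDegree → F.coeff (k+1) < F.coeff k := by
    intro k hk1 hk2
    rw [cC, cC]
    exact_mod_cast Ccoef_dec hr hqr hpq h hk1 (by omega)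
  have hTrap : Trapezoidal F := by
    refine ⟨q + r - 2, p - 1, by omega, by omega, rinc, fun k hk1 hk2 => rplat k hk1 hk2,
      rdec⟩
  refine ⟨hTrap, ⟨⟨q + r - 2, by omega, ?_⟩, ?_⟩, by omega⟩
  · -- the run of length p+1-q-r starting at q+r-2
    intro i hi
    induction i with
    | zero => rfl
    | succ n ih =>
      have h1 : q + r - 2 + n < p - 1 := by omega
      have := rplat (q + r - 2 + n) (by omega) h1
      rw [show q + r - 2 + (n+1) = (q + r - 2 + n) + 1 from rfl, ← this]
      exact ih (by omega)
  · -- maximality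
    rintro l' ⟨k0, hk0, hrun⟩
    by_cases hsmall : q + r ≤ 2
    · omega
    by_contra hbig
    push_neg at hbig
    have hl1 : 1 ≤ l' := by omega
    rcases lt_or_ge k0 (q + r - 2) with hc1 | hc1
    · have h1 := rinc k0 hc1
      have h2 := hrun 1 hl1
      rw [show k0 + 1 = k0 + 1 from rfl] at h2
      exact absurd (h2 ▸ h1) (lt_irrefl _)
    rcases le_or_gt k0 (p - 1) with hc2 | hc2
    · -- the run covers positions p-1 and p
      have ha : p - 1 - k0 ≤ l' := by omega
      have hb : p - 1 - k0 + 1 ≤ l' := by omega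
      have e1 := hrun (p - 1 - k0) ha
      have e2 := hrun (p - 1 - k0 + 1) hb
      have hj : k0 + (p - 1 - k0) = p - 1 := by omega
      have hj' : k0 + (p - 1 - k0 + 1) = (p - 1) + 1 := by omega
      rw [hj] at e1
      rw [hj'] at e2
      have hd := rdec (p - 1) le_rfl (by omega)
      rw [e1, e2] at hd
      exact absurd hd (lt_irrefl _)
    · have hd := rdec k0 (by omega) (by omega)
      have h2 := hrun 1 hl1
      rw [h2] at hd
      exact absurd hd (lt_irrefl _)
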